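/- For every integer l with 1 ≤ l and 2l − 1 ≤ n1, the expected number of ordered pairs (P, Q) of present entry paths of length l from u such that P and Q share no vertex other than u equals ((n1−1)!/(n1−2l+1)!) · n2 · (n2−1) · p1^{2(l−1)} · b². -/

import Mathlib

open MeasureTheory

/-- The Bernoulli measure on `Bool` with success probability `p` (for `p ∈ [0,1]`). -/
noncomputable def bernoulliMeasure (p : ℝ) : Measure Bool :=
  ENNReal.ofReal p • Measure.dirac true + ENNReal.ofReal (1 - p) • Measure.dirac false

/-- Sample space: one Boolean indicator for each unordered pair of vertices of the
backward class `V1 = Fin n1`, and one for each pair in `V1 × V2`. -/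
abbrev Omega (n1 n2 : ℕ) : Type :=
  (Sym2 (Fin n1) → Bool) × (Fin n1 × Fin n2 → Bool)

/-- Product measure: each within-`V1` edge indicator is Bernoulli(`p1`), each bridge
indicator is Bernoulli(`b`), all independent. -/
noncomputable def graphMeasure (n1 n2 : ℕ) (p1 b : ℝ) : Measure (Omega n1 n2) :=
  (Measure.pi fun _ : Sym2 (Fin n1) => bernoulliMeasure p1).prod
    (Measure.pi fun _ : Fin n1 × Fin n2 => bernoulliMeasure b)

open scoped Classical in
/-- Entry paths of length `l` from `u`: tuples `(v_1, …, v_l, w)` with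
`v_1 = u`, the `v_i ∈ V1` pairwise distinct, and `w ∈ V2`. -/
noncomputable def entryPaths (n1 n2 l : ℕ) (u : Fin n1) :
    Finset ((Fin l → Fin n1) × Fin n2) :=
  Finset.univ.filter fun P => Function.Injective P.1 ∧ ∀ h : 0 < l, P.1 ⟨0, h⟩ = u

/-- An entry path is present in the outcome `ω` if all `l − 1` within-`V1` edges
along it and its final bridge are present. -/
def present (n1 n2 l : ℕ) (P : (Fin l → Fin n1) × Fin n2) (ω : Omega n1 n2) : Prop :=
  (∀ j : Fin (l - 1),
      ω.1 s(P.1 ⟨j.1, lt_of_lt_of_le j.2 (Nat.sub_le l 1)⟩,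
            P.1 ⟨j.1 + 1, Nat.add_lt_of_lt_sub j.2⟩) = true) ∧
  ∀ h : 0 < l, ω.2 (P.1 ⟨l - 1, Nat.sub_lt h Nat.one_pos⟩, P.2) = true

open scoped Classical in
/-- `X_l`: the number of present entry paths of length `l` from `u`, as a real number. -/
noncomputable def pathCount (n1 n2 l : ℕ) (u : Fin n1) (ω : Omega n1 n2) : ℝ :=
  ((entryPaths n1 n2 l u).filter fun P => present n1 n2 l P ω).card

lemma bernoulli_prob {p : ℝ} (h0 : 0 ≤ p) (h1 : p ≤ 1) :
    IsProbabilityMeasure (bernoulliMeasure p) := by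
  constructor
  have h : p + (1 - p) = 1 := by ring
  simp [bernoulliMeasure, ← ENNReal.ofReal_add h0 (by linarith : (0:ℝ) ≤ 1 - p), h]

lemma bernoulli_true (p : ℝ) : bernoulliMeasure p {true} = ENNReal.ofReal p := by
  simp [bernoulliMeasure, Measure.dirac_apply]

lemma pi_all_true {ι : Type*} [Fintype ι] [DecidableEq ι] {p : ℝ} (h0 : 0 ≤ p) (h1 : p ≤ 1)
    (E : Finset ι) :
    (Measure.pi fun _ : ι => bernoulliMeasure p) {f : ι → Bool | ∀ e ∈ E, f e = true}
      = ENNReal.ofReal p ^ E.card := by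
  haveI := bernoulli_prob h0 h1
  have hset : {f : ι → Bool | ∀ e ∈ E, f e = true}
      = Set.univ.pi (fun e => if e ∈ E then ({true} : Set Bool) else Set.univ) := by
    ext f
    simp only [Set.mem_setOf_eq, Set.mem_pi, Set.mem_univ, forall_true_left]
    constructor
    · intro h e; split_ifs with he
      · simpa using h e he
      · trivial
    · intro h e he; have := h e; rw [if_pos he] at this; simpa using this
  rw [hset, Measure.pi_pi]
  have hval : ∀ e : ι, (bernoulliMeasure p) (if e ∈ E then ({true} : Set Bool) else Set.univ)
      = if e ∈ E then ENNReal.ofReal p else 1 := by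
    intro e; split_ifs
    · exact bernoulli_true p
    · exact measure_univ
  rw [Finset.prod_congr rfl (fun e _ => hval e), Finset.prod_ite_mem, Finset.univ_inter,
    Finset.prod_const]

lemma graphMeasure_event {n1 n2 : ℕ} {p1 b : ℝ} (hp0 : 0 ≤ p1) (hp1 : p1 ≤ 1)
    (hb0 : 0 ≤ b) (hb1 : b ≤ 1) (E : Finset (Sym2 (Fin n1))) (B : Finset (Fin n1 × Fin n2)) :
    graphMeasure n1 n2 p1 b {ω | (∀ e ∈ E, ω.1 e = true) ∧ ∀ x ∈ B, ω.2 x = true}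
      = ENNReal.ofReal p1 ^ E.card * ENNReal.ofReal b ^ B.card := by
  haveI := bernoulli_prob hp0 hp1
  haveI := bernoulli_prob hb0 hb1
  have hset : {ω : Omega n1 n2 | (∀ e ∈ E, ω.1 e = true) ∧ ∀ x ∈ B, ω.2 x = true}
      = {f | ∀ e ∈ E, f e = true} ×ˢ {g | ∀ x ∈ B, g x = true} := by
    ext ⟨f, g⟩; simp [Set.mem_prod]
  rw [graphMeasure, hset, Measure.prod_prod, pi_all_true hp0 hp1, pi_all_true hb0 hb1]
-- helpers
lemma path_ne_u {l n1 : ℕ} {f : Fin l → Fin n1} {u : Fin n1} (hf : Function.Injective f)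
    (h0 : 0 < l) (hu : f ⟨0, h0⟩ = u) {i : Fin l} (hi : i.1 ≠ 0) : f i ≠ u := by
  intro h
  apply hi
  have h2 : i = ⟨0, h0⟩ := hf (h.trans hu.symm)
  simpa using congrArg Fin.val h2

noncomputable def pathEdges (n1 l : ℕ) (f : Fin l → Fin n1) : Finset (Sym2 (Fin n1)) :=
  Finset.image (fun j : Fin (l-1) =>
    s(f ⟨j.1, lt_of_lt_of_le j.2 (Nat.sub_le l 1)⟩, f ⟨j.1 + 1, Nat.add_lt_of_lt_sub j.2⟩))
    Finset.univ

lemma pathEdges_card {n1 l : ℕ} {f : Fin l → Fin n1} (hf : Function.Injective f) :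
    (pathEdges n1 l f).card = l - 1 := by
  rw [pathEdges, Finset.card_image_of_injective _ ?_, Finset.card_univ, Fintype.card_fin]
  intro j k h
  simp only [Sym2.eq_iff] at h
  rcases h with ⟨h1, _⟩ | ⟨h1, h2⟩
  · have := congrArg Fin.val (hf h1); exact Fin.ext (by simpa using this)
  · have e1 := congrArg Fin.val (hf h1)
    have e2 := congrArg Fin.val (hf h2)
    simp only [] at e1 e2
    exact Fin.ext (by omega)

lemma edges_union_card {n1 l : ℕ} {u : Fin n1} {P Q : Fin l → Fin n1}
    (hP : Function.Injective P) (hQ : Function.Injective Q) (h0 : 0 < l)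
    (hPu : P ⟨0, h0⟩ = u) (hQu : Q ⟨0, h0⟩ = u)
    (hdisj : ∀ i j : Fin l, P i = Q j → P i = u) :
    (pathEdges n1 l P ∪ pathEdges n1 l Q).card = 2 * (l - 1) := by
  have hdis : Disjoint (pathEdges n1 l P) (pathEdges n1 l Q) := by
    rw [Finset.disjoint_left]
    intro e heP heQ
    simp only [pathEdges, Finset.mem_image, Finset.mem_univ, true_and] at heP heQ
    obtain ⟨a, ha⟩ := heP
    obtain ⟨c, hc⟩ := heQ
    rw [← hc, Sym2.eq_iff] at ha
    have key : ∃ j : Fin l, P ⟨a.1 + 1, Nat.add_lt_of_lt_sub a.2⟩ = Q j := by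
      rcases ha with ⟨_, h2⟩ | ⟨_, h2⟩ <;> exact ⟨_, h2⟩
    obtain ⟨j, hj⟩ := key
    exact path_ne_u hP h0 hPu (by simp) (hdisj _ _ hj)
  rw [Finset.card_union_of_disjoint hdis, pathEdges_card hP, pathEdges_card hQ]
  omega

lemma present_iff {n1 n2 l : ℕ} (h0 : 0 < l) (P : (Fin l → Fin n1) × Fin n2) (ω : Omega n1 n2) :
    present n1 n2 l P ω ↔
      (∀ e ∈ pathEdges n1 l P.1, ω.1 e = true) ∧
        ω.2 (P.1 ⟨l - 1, Nat.sub_lt h0 Nat.one_pos⟩, P.2) = true := by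
  constructor
  · rintro ⟨h1, h2⟩
    refine ⟨?_, h2 h0⟩
    intro e he
    simp only [pathEdges, Finset.mem_image, Finset.mem_univ, true_and] at he
    obtain ⟨j, rfl⟩ := he
    exact h1 j
  · rintro ⟨h1, h2⟩
    exact ⟨fun j => h1 _ (Finset.mem_image_of_mem _ (Finset.mem_univ j)), fun _ => h2⟩

lemma present_pair_set {n1 n2 l : ℕ} (h0 : 0 < l) (P Q : (Fin l → Fin n1) × Fin n2) :
    {ω : Omega n1 n2 | present n1 n2 l P ω ∧ present n1 n2 l Q ω}
      = {ω | (∀ e ∈ pathEdges n1 l P.1 ∪ pathEdges n1 l Q.1, ω.1 e = true) ∧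
          ∀ x ∈ ({(P.1 ⟨l - 1, Nat.sub_lt h0 Nat.one_pos⟩, P.2),
                  (Q.1 ⟨l - 1, Nat.sub_lt h0 Nat.one_pos⟩, Q.2)} :
              Finset (Fin n1 × Fin n2)), ω.2 x = true} := by
  ext ω
  simp only [Set.mem_setOf_eq, present_iff h0, Finset.mem_union, Finset.mem_insert,
    Finset.mem_singleton]
  constructor
  · rintro ⟨⟨h1, h2⟩, h3, h4⟩
    refine ⟨fun e he => he.elim (h1 e) (h3 e), fun x hx => ?_⟩
    rcases hx with rfl | rfl
    · exact h2
    · exact h4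
  · rintro ⟨h1, h2⟩
    exact ⟨⟨fun e he => h1 e (Or.inl he), h2 _ (Or.inl rfl)⟩,
      fun e he => h1 e (Or.inr he), h2 _ (Or.inr rfl)⟩

lemma prob_pair {n1 n2 l : ℕ} {u : Fin n1} {p1 b : ℝ} (hp0 : 0 ≤ p1) (hp1 : p1 ≤ 1)
    (hb0 : 0 ≤ b) (hb1 : b ≤ 1) (h0 : 0 < l) {P Q : (Fin l → Fin n1) × Fin n2}
    (hP : Function.Injective P.1) (hQ : Function.Injective Q.1)
    (hPu : P.1 ⟨0, h0⟩ = u) (hQu : Q.1 ⟨0, h0⟩ = u)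
    (hdisj : ∀ i j : Fin l, P.1 i = Q.1 j → P.1 i = u) (hne : P.2 ≠ Q.2) :
    graphMeasure n1 n2 p1 b {ω | present n1 n2 l P ω ∧ present n1 n2 l Q ω}
      = ENNReal.ofReal p1 ^ (2 * (l - 1)) * ENNReal.ofReal b ^ 2 := by
  rw [present_pair_set h0, graphMeasure_event hp0 hp1 hb0 hb1,
    edges_union_card hP hQ h0 hPu hQu hdisj,
    Finset.card_pair (by intro h; exact hne (Prod.ext_iff.1 h).2)]

def fwdFun (n1 l : ℕ) (P Q : Fin l → Fin n1) (i : Fin (2 * (l - 1))) : Fin n1 :=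
  if hi : i.1 < l - 1 then P ⟨i.1 + 1, by omega⟩ else Q ⟨i.1 - (l - 1) + 1, by omega⟩

def bwdP (n1 l : ℕ) (u : Fin n1) (h : Fin (2 * (l - 1)) → {x : Fin n1 // x ≠ u}) :
    Fin l → Fin n1 :=
  fun i => if hi : i.1 = 0 then u else (h ⟨i.1 - 1, by omega⟩).1

def bwdQ (n1 l : ℕ) (u : Fin n1) (h : Fin (2 * (l - 1)) → {x : Fin n1 // x ≠ u}) :
    Fin l → Fin n1 :=
  fun i => if hi : i.1 = 0 then u else (h ⟨l - 1 + i.1 - 1, by omega⟩).1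


open scoped Classical in
lemma count_S0 (n1 n2 l : ℕ) (u : Fin n1) (hl1 : 1 ≤ l) :
    ((((entryPaths n1 n2 l u) ×ˢ (entryPaths n1 n2 l u)).filter fun PQ =>
        (∀ i j : Fin l, PQ.1.1 i = PQ.2.1 j → PQ.1.1 i = u) ∧ PQ.1.2 ≠ PQ.2.2).card)
      = (n1 - 1).descFactorial (2 * (l - 1)) * (n2 * n2 - n2) := by
  classical
  have h0 : 0 < l := hl1
  have hcard2 : ((Finset.univ.filter fun h : Fin (2 * (l - 1)) → {x : Fin n1 // x ≠ u} =>
        Function.Injective h) ×ˢ (Finset.univ : Finset (Fin n2)).offDiag).card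
      = (n1 - 1).descFactorial (2 * (l - 1)) * (n2 * n2 - n2) := by
    rw [Finset.card_product, Finset.offDiag_card, Finset.card_univ, Fintype.card_fin]
    congr 1
    rw [← Fintype.card_subtype]
    rw [Fintype.card_congr (Equiv.subtypeInjectiveEquivEmbedding _ _),
      Fintype.card_embedding_eq, Fintype.card_fin]
    congr 1
    have h1 := Fintype.card_subtype_compl (fun x : Fin n1 => x = u)
    simp only [Fintype.card_subtype_eq, Fintype.card_fin] at h1
    exact h1
  rw [← hcard2]
  refine Finset.card_bij'
    (fun PQ hm =>
      ((fun i : Fin (2 * (l - 1)) => (⟨fwdFun n1 l PQ.1.1 PQ.2.1 i, by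
          have hm' := hm
          simp only [Finset.mem_filter, Finset.mem_product, entryPaths, Finset.mem_univ,
            true_and] at hm'
          obtain ⟨⟨⟨hPinj, hPu⟩, hQinj, hQu⟩, hdisj, hne⟩ := hm'
          simp only [fwdFun]
          split_ifs with hi
          · exact path_ne_u hPinj h0 (hPu h0) (by simp)
          · exact path_ne_u hQinj h0 (hQu h0) (by simp)⟩ : {x : Fin n1 // x ≠ u})),
        (PQ.1.2, PQ.2.2)))
    (fun T hm => ((bwdP n1 l u T.1, T.2.1), (bwdQ n1 l u T.1, T.2.2)))
    ?hi ?hj ?li ?ri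
  case hi =>
    intro PQ hm
    simp only [Finset.mem_filter, Finset.mem_product, entryPaths, Finset.mem_univ,
      true_and] at hm
    obtain ⟨⟨⟨hPinj, hPu⟩, hQinj, hQu⟩, hdisj, hne⟩ := hm
    refine Finset.mem_product.2 ⟨Finset.mem_filter.2 ⟨Finset.mem_univ _, ?_⟩,
      Finset.mem_offDiag.2 ⟨Finset.mem_univ _, Finset.mem_univ _, hne⟩⟩
    intro a c hac
    have hval : fwdFun n1 l PQ.1.1 PQ.2.1 a = fwdFun n1 l PQ.1.1 PQ.2.1 c :=
      congrArg Subtype.val hac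
    simp only [fwdFun] at hval
    split_ifs at hval with ha hc hc
    · have := congrArg Fin.val (hPinj hval)
      simp only [] at this
      exact Fin.ext (by omega)
    · exfalso
      have := hdisj _ _ hval
      exact path_ne_u hPinj h0 (hPu h0) (by simp) this
    · exfalso
      have := hdisj _ _ hval.symm
      exact path_ne_u hPinj h0 (hPu h0) (by simp) this
    · have := congrArg Fin.val (hQinj hval)
      simp only [] at this
      have ha2 := a.2
      have hc2 := c.2
      exact Fin.ext (by omega)
  case hj =>
    intro T hm
    obtain ⟨hmem1, hmem2⟩ := Finset.mem_product.1 hm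
    have hinj : Function.Injective T.1 := (Finset.mem_filter.1 hmem1).2
    have hne : T.2.1 ≠ T.2.2 := (Finset.mem_offDiag.1 hmem2).2.2
    have hbwdPinj : Function.Injective (bwdP n1 l u T.1) := by
      intro a c hac
      simp only [bwdP] at hac
      split_ifs at hac with ha hc hc
      · exact Fin.ext (by omega)
      · exact absurd hac.symm (T.1 _).2
      · exact absurd hac (T.1 _).2
      · have := congrArg Fin.val (hinj (Subtype.ext hac))
        simp only [] at this
        exact Fin.ext (by omega)
    have hbwdQinj : Function.Injective (bwdQ n1 l u T.1) := by
      intro a c hac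
      simp only [bwdQ] at hac
      split_ifs at hac with ha hc hc
      · exact Fin.ext (by omega)
      · exact absurd hac.symm (T.1 _).2
      · exact absurd hac (T.1 _).2
      · have h2 := congrArg Fin.val (hinj (Subtype.ext hac))
        simp only [] at h2
        have := a.2
        exact Fin.ext (by omega)
    simp only [Finset.mem_filter, Finset.mem_product, entryPaths, Finset.mem_univ, true_and]
    refine ⟨⟨⟨hbwdPinj, fun h => ?_⟩, hbwdQinj, fun h => ?_⟩, ?_, hne⟩
    · simp [bwdP]
    · simp [bwdQ]
    · intro a c hac
      by_cases ha : a.1 = 0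
      · simp [bwdP, ha]
      · exfalso
        simp only [bwdP, dif_neg ha] at hac ⊢
        by_cases hc : c.1 = 0
        · simp only [bwdQ, dif_pos hc] at hac
          exact (T.1 _).2 hac
        · simp only [bwdQ, dif_neg hc] at hac
          have h2 := congrArg Fin.val (hinj (Subtype.ext hac))
          simp only [] at h2
          have ha2 := a.2
          have hc2 := c.2
          omega
  case li =>
    rintro ⟨⟨P1, p2⟩, Q1, q2⟩ hm
    simp only [Finset.mem_filter, Finset.mem_product, entryPaths, Finset.mem_univ,
      true_and] at hm
    obtain ⟨⟨⟨hPinj, hPu⟩, hQinj, hQu⟩, hdisj, hne⟩ := hm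
    simp only [Prod.mk.injEq]
    refine ⟨⟨funext fun i => ?_, trivial⟩, funext fun i => ?_, trivial⟩
    · simp only [bwdP]
      split_ifs with hi
      · have hi' : i = ⟨0, h0⟩ := Fin.ext (by simpa using hi)
        rw [hi']
        exact (hPu h0).symm
      · show fwdFun n1 l P1 Q1 _ = _
        simp only [fwdFun]
        rw [dif_pos (show (i.1 - 1 : ℕ) < l - 1 by omega)]
        exact congrArg P1 (Fin.ext (show i.1 - 1 + 1 = i.1 by omega))
    · simp only [bwdQ]
      split_ifs with hi
      · have hi' : i = ⟨0, h0⟩ := Fin.ext (by simpa using hi)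
        rw [hi']
        exact (hQu h0).symm
      · show fwdFun n1 l P1 Q1 _ = _
        simp only [fwdFun]
        rw [dif_neg (show ¬ ((l - 1 + i.1 - 1 : ℕ) < l - 1) by omega)]
        exact congrArg Q1 (Fin.ext (show l - 1 + i.1 - 1 - (l - 1) + 1 = i.1 by omega))
  case ri =>
    rintro ⟨h, c1, c2⟩ hm
    simp only [Prod.mk.injEq]
    refine ⟨funext fun i => Subtype.ext ?_, trivial⟩
    show fwdFun n1 l (bwdP n1 l u h) (bwdQ n1 l u h) i = (h i).1
    have hi2 := i.2
    simp only [fwdFun]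
    split_ifs with hi
    · simp only [bwdP]
      rw [dif_neg (show ¬ (i.1 + 1 = 0) by omega)]
      exact congrArg (fun j => (h j).1)
        (Fin.ext (show i.1 + 1 - 1 = i.1 by omega))
    · simp only [bwdQ]
      rw [dif_neg (show ¬ (i.1 - (l - 1) + 1 = 0) by omega)]
      exact congrArg (fun j => (h j).1)
        (Fin.ext (show l - 1 + (i.1 - (l - 1) + 1) - 1 = i.1 by omega))


open scoped Classical in
/-- The dominant `Z_0` term in the second-moment computation of Lemma 5: the expected
number of ordered pairs of present, vertex-disjoint-except-`u` entry paths of length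
`l` from `u` equals `((n1−1)!/(n1−2l+1)!) · n2 · (n2−1) · p1^{2(l−1)} · b²`. -/
theorem stmt14 (n1 n2 : ℕ) (hn1 : 0 < n1) (hn2 : 0 < n2) (u : Fin n1)
    (p1 b : ℝ) (hp0 : 0 ≤ p1) (hp1 : p1 ≤ 1) (hb0 : 0 ≤ b) (hb1 : b ≤ 1)
    (l : ℕ) (hl1 : 1 ≤ l) (hln : 2 * l - 1 ≤ n1) :
    ∫ ω, ((((entryPaths n1 n2 l u) ×ˢ (entryPaths n1 n2 l u)).filter fun PQ =>
          ((∀ i j : Fin l, PQ.1.1 i = PQ.2.1 j → PQ.1.1 i = u) ∧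
              PQ.1.2 ≠ PQ.2.2) ∧
            present n1 n2 l PQ.1 ω ∧ present n1 n2 l PQ.2 ω).card : ℝ)
        ∂(graphMeasure n1 n2 p1 b) =
      ((n1 - 1).factorial : ℝ) / ((n1 - (2 * l - 1)).factorial : ℝ) *
        (n2 : ℝ) * ((n2 : ℝ) - 1) * p1 ^ (2 * (l - 1)) * b ^ 2 := by
  classical
  have h0 : 0 < l := hl1
  haveI := bernoulli_prob hp0 hp1
  haveI := bernoulli_prob hb0 hb1
  haveI : IsProbabilityMeasure (graphMeasure n1 n2 p1 b) := by
    unfold graphMeasure; infer_instance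
  have hpt : ∀ ω : Omega n1 n2,
      ((((entryPaths n1 n2 l u) ×ˢ (entryPaths n1 n2 l u)).filter fun PQ =>
          ((∀ i j : Fin l, PQ.1.1 i = PQ.2.1 j → PQ.1.1 i = u) ∧
              PQ.1.2 ≠ PQ.2.2) ∧
            present n1 n2 l PQ.1 ω ∧ present n1 n2 l PQ.2 ω).card : ℝ)
        = ∑ PQ ∈ (((entryPaths n1 n2 l u) ×ˢ (entryPaths n1 n2 l u)).filter fun PQ =>
            (∀ i j : Fin l, PQ.1.1 i = PQ.2.1 j → PQ.1.1 i = u) ∧ PQ.1.2 ≠ PQ.2.2),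
            (if present n1 n2 l PQ.1 ω ∧ present n1 n2 l PQ.2 ω then (1:ℝ) else 0) := by
    intro ω
    rw [← Finset.filter_filter, Finset.card_filter, Nat.cast_sum]
    exact Finset.sum_congr rfl fun x _ => by split_ifs <;> simp
  simp only [hpt]
  rw [integral_finset_sum _ (fun PQ _ => ?_)]
  swap
  · have heq : (fun ω : Omega n1 n2 =>
        if present n1 n2 l PQ.1 ω ∧ present n1 n2 l PQ.2 ω then (1:ℝ) else 0)
        = Set.indicator {ω : Omega n1 n2 |
            present n1 n2 l PQ.1 ω ∧ present n1 n2 l PQ.2 ω} (fun _ => (1:ℝ)) := by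
      funext ω; simp [Set.indicator_apply]
    rw [heq]
    exact (integrable_const 1).indicator (Set.toFinite _).measurableSet
  have hterm : ∀ PQ ∈ (((entryPaths n1 n2 l u) ×ˢ (entryPaths n1 n2 l u)).filter fun PQ =>
        (∀ i j : Fin l, PQ.1.1 i = PQ.2.1 j → PQ.1.1 i = u) ∧ PQ.1.2 ≠ PQ.2.2),
      (∫ ω, (if present n1 n2 l PQ.1 ω ∧ present n1 n2 l PQ.2 ω then (1:ℝ) else 0)
          ∂(graphMeasure n1 n2 p1 b)) = p1 ^ (2 * (l - 1)) * b ^ 2 := by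
    intro PQ hm
    simp only [Finset.mem_filter, Finset.mem_product, entryPaths, Finset.mem_univ,
      true_and] at hm
    obtain ⟨⟨⟨hPinj, hPu⟩, hQinj, hQu⟩, hdisj, hne⟩ := hm
    have heq : (fun ω : Omega n1 n2 =>
        if present n1 n2 l PQ.1 ω ∧ present n1 n2 l PQ.2 ω then (1:ℝ) else 0)
        = Set.indicator {ω : Omega n1 n2 |
            present n1 n2 l PQ.1 ω ∧ present n1 n2 l PQ.2 ω} (fun _ => (1:ℝ)) := by
      funext ω; simp [Set.indicator_apply]
    rw [heq, integral_indicator_const _ (Set.toFinite _).measurableSet, smul_eq_mul, mul_one,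
      measureReal_def, prob_pair hp0 hp1 hb0 hb1 h0 hPinj hQinj (hPu h0) (hQu h0) hdisj hne]
    rw [ENNReal.toReal_mul, ENNReal.toReal_pow, ENNReal.toReal_pow,
      ENNReal.toReal_ofReal hp0, ENNReal.toReal_ofReal hb0]
  rw [Finset.sum_congr rfl hterm, Finset.sum_const, nsmul_eq_mul, count_S0 n1 n2 l u hl1]
  have h1 : 2 * (l - 1) ≤ n1 - 1 := by omega
  have h2 := Nat.factorial_mul_descFactorial h1
  have h3 : n1 - 1 - 2 * (l - 1) = n1 - (2 * l - 1) := by omega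
  rw [h3] at h2
  have h5 : ((n1 - (2 * l - 1)).factorial : ℝ) * ((n1 - 1).descFactorial (2 * (l - 1)) : ℝ)
      = ((n1 - 1).factorial : ℝ) := by exact_mod_cast congrArg (Nat.cast (R := ℝ)) h2
  have h4 : ((n1 - (2 * l - 1)).factorial : ℝ) ≠ 0 :=
    Nat.cast_ne_zero.2 (Nat.factorial_ne_zero _)
  have h6 : ((n1 - 1).descFactorial (2 * (l - 1)) : ℝ)
      = ((n1 - 1).factorial : ℝ) / ((n1 - (2 * l - 1)).factorial : ℝ) := by
    field_simp
    linarith [h5]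
  have hle : n2 ≤ n2 * n2 := Nat.le_mul_of_pos_left n2 hn2
  rw [Nat.cast_mul, h6, Nat.cast_sub hle, Nat.cast_mul]
  ring
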